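/- Random hyperplane cut probability: if u, v are unit vectors in ℝ^d and Z is uniformly distributed on the unit sphere of ℝ^d, then P(sign(⟨u,Z⟩) ≠ sign(⟨v,Z⟩)) = arccos(⟨u,v⟩)/π. -/

import Mathlib

open scoped RealInnerProductSpace
open MeasureTheory

namespace RandomHyperplaneAux
open Module
open scoped ENNReal

abbrev V (d : ℕ) : Type := EuclideanSpace ℝ (Fin d)

variable {d : ℕ}

/-- The "sign mismatch" event. -/
def Ev (u v : V d) : Set (V d) := {z | ¬ (0 ≤ ⟪u, z⟫ ↔ 0 ≤ ⟪v, z⟫)}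

/-- Common zero set of inner products with a family. -/
def Zv {k : ℕ} (f : Fin k → V d) : Set (V d) := {z | ∀ i, ⟪f i, z⟫ = 0}

lemma measurableSet_halfspace (u : V d) : MeasurableSet {z : V d | 0 ≤ ⟪u, z⟫} := by
  have : Continuous fun z : V d => ⟪u, z⟫ := Continuous.inner continuous_const continuous_id
  exact (isClosed_le continuous_const this).measurableSet

lemma measurableSet_Ev (u v : V d) : MeasurableSet (Ev u v) := by
  have h : Ev u v = ({z : V d | 0 ≤ ⟪u, z⟫} \ {z : V d | 0 ≤ ⟪v, z⟫}) ∪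
      ({z : V d | 0 ≤ ⟪v, z⟫} \ {z : V d | 0 ≤ ⟪u, z⟫}) := by
    ext z
    simp only [Ev, Set.mem_union, Set.mem_diff, Set.mem_setOf_eq]
    tauto
  rw [h]
  exact ((measurableSet_halfspace u).diff (measurableSet_halfspace v)).union
    ((measurableSet_halfspace v).diff (measurableSet_halfspace u))

lemma measurableSet_Zv {k : ℕ} (f : Fin k → V d) : MeasurableSet (Zv f) := by
  have : Zv f = ⋂ i, {z : V d | ⟪f i, z⟫ = 0} := by ext z; simp [Zv]
  rw [this]
  refine MeasurableSet.iInter fun i => ?_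
  have : Continuous fun z : V d => ⟪f i, z⟫ := Continuous.inner continuous_const continuous_id
  exact (isClosed_eq this continuous_const).measurableSet

lemma meas_preimage (μ : Measure (V d)) (hinv : ∀ O : V d ≃ₗᵢ[ℝ] V d, μ.map O = μ)
    (O : V d ≃ₗᵢ[ℝ] V d) {s : Set (V d)} (hs : MeasurableSet s) : μ (⇑O ⁻¹' s) = μ s := by
  conv_rhs => rw [← hinv O, Measure.map_apply O.continuous.measurable hs]

/-- An isometry carrying one orthonormal family onto another. -/
lemma exists_isometry_family {k : ℕ} {f g : Fin k → V d}
    (hf : Orthonormal ℝ f) (hg : Orthonormal ℝ g) :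
    ∃ O : V d ≃ₗᵢ[ℝ] V d, ∀ i, O (f i) = g i := by
  classical
  have hkd : k ≤ d := by
    have := hf.linearIndependent.fintype_card_le_finrank
    simpa [finrank_euclideanSpace_fin] using this
  have hcard : finrank ℝ (EuclideanSpace ℝ (Fin d)) = Fintype.card (Fin d) := by
    simp [finrank_euclideanSpace_fin]
  set s : Set (Fin d) := {i | (i : ℕ) < k} with hs
  have key : ∀ (h : Fin k → EuclideanSpace ℝ (Fin d)), Orthonormal ℝ h →
      ∃ b : OrthonormalBasis (Fin d) ℝ (EuclideanSpace ℝ (Fin d)),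
        ∀ i : Fin k, b (Fin.castLE hkd i) = h i := by
    intro h hh
    set v : Fin d → EuclideanSpace ℝ (Fin d) :=
      fun i => if hi : (i : ℕ) < k then h ⟨i, hi⟩ else 0 with hv
    have hres : Orthonormal ℝ (s.restrict v) := by
      have : s.restrict v = h ∘ (fun x : s => (⟨x.1, x.2⟩ : Fin k)) := by
        funext x
        have hx : ((x : Fin d) : ℕ) < k := x.2
        simp only [Set.restrict_apply, hv, Function.comp_apply, dif_pos hx]
        exact dif_pos hx
      rw [this]
      exact hh.comp _ (fun a b hab => by
        exact Subtype.ext (Fin.ext (by simpa using congrArg Fin.val hab)))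
    obtain ⟨b, hb⟩ := hres.exists_orthonormalBasis_extension_of_card_eq hcard
    refine ⟨b, fun i => ?_⟩
    have hmem : (Fin.castLE hkd i) ∈ s := by simpa [hs] using i.2
    rw [hb _ hmem]
    simp [hv, Fin.castLE]
  obtain ⟨bf, hbf⟩ := key f hf
  obtain ⟨bg, hbg⟩ := key g hg
  refine ⟨bf.repr.trans bg.repr.symm, fun i => ?_⟩
  have h1 : bf.repr (f i) = EuclideanSpace.single (Fin.castLE hkd i) 1 := by
    rw [← hbf i]; exact bf.repr_self _
  have h2 : bg.repr.symm (EuclideanSpace.single (Fin.castLE hkd i) 1) = g i := by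
    rw [← hbg i, ← bg.repr_self (Fin.castLE hkd i), LinearIsometryEquiv.symm_apply_apply]
  simp [LinearIsometryEquiv.trans_apply, h1, h2]


lemma eq_of_inner_eq_one {d : ℕ} {u v : EuclideanSpace ℝ (Fin d)} (hu : ‖u‖ = 1) (hv : ‖v‖ = 1)
    (h : ⟪u, v⟫ = 1) : v = u := by
  have h2 : ‖u - v‖ ^ 2 = 0 := by
    rw [norm_sub_sq_real, hu, hv, h]; ring
  have := pow_eq_zero_iff (n := 2) (by norm_num) |>.mp h2
  rw [norm_eq_zero, sub_eq_zero] at this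
  exact this.symm

lemma eq_neg_of_inner_eq_neg_one {d : ℕ} {u v : EuclideanSpace ℝ (Fin d)} (hu : ‖u‖ = 1) (hv : ‖v‖ = 1)
    (h : ⟪u, v⟫ = -1) : v = -u := by
  have h' : ⟪u, -v⟫ = 1 := by rw [inner_neg_right, h]; ring
  have h2 := eq_of_inner_eq_one hu (by rw [norm_neg]; exact hv) h'
  -- h2 : -v = u
  rw [← h2]; simp

lemma onpair {d : ℕ} {u v : EuclideanSpace ℝ (Fin d)} (hu : ‖u‖ = 1) (hv : ‖v‖ = 1)
    {c : ℝ} (hc : ⟪u, v⟫ = c) (hc1 : c ≠ 1) (hcm1 : c ≠ -1) :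
    Orthonormal ℝ ![u, (Real.sqrt (1 - c ^ 2))⁻¹ • (v - c • u)] := by
  have hcle : |c| ≤ 1 := by
    have := abs_real_inner_le_norm u v
    rw [hc, hu, hv] at this; simpa using this
  have hclt : c ^ 2 < 1 := by
    rcases lt_or_eq_of_le hcle with h | h
    · nlinarith [abs_nonneg c, neg_abs_le c, le_abs_self c]
    · rcases abs_eq (by norm_num : (0:ℝ) ≤ 1) |>.mp h with h | h
      · exact absurd h hc1
      · exact absurd h hcm1
  have hs : (0:ℝ) < Real.sqrt (1 - c ^ 2) := Real.sqrt_pos.mpr (by linarith)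
  have hs2 : Real.sqrt (1 - c ^ 2) ^ 2 = 1 - c ^ 2 := Real.sq_sqrt (by linarith)
  have huu : ⟪u, u⟫ = 1 := by
    rw [real_inner_self_eq_norm_sq, hu]; norm_num
  have hvv : ⟪v, v⟫ = 1 := by
    rw [real_inner_self_eq_norm_sq, hv]; norm_num
  have hvu : ⟪v, u⟫ = c := by rw [real_inner_comm]; exact hc
  set w : EuclideanSpace ℝ (Fin d) := (Real.sqrt (1 - c ^ 2))⁻¹ • (v - c • u) with hw
  have huw : ⟪u, w⟫ = 0 := by
    rw [hw, real_inner_smul_right, inner_sub_right, real_inner_smul_right, huu, hc]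
    ring
  have hwu : ⟪w, u⟫ = 0 := by rw [real_inner_comm]; exact huw
  have hww : ⟪w, w⟫ = 1 := by
    rw [hw, real_inner_smul_right, real_inner_smul_left, inner_sub_left, inner_sub_right,
      inner_sub_right, real_inner_smul_left, real_inner_smul_left, real_inner_smul_right,
      real_inner_smul_right, huu, hvv, hvu, hc]
    field_simp
    nlinarith [hs, hs2]
  have hwn : ‖w‖ = 1 := by
    have h := hww
    rw [real_inner_self_eq_norm_sq] at h
    nlinarith [norm_nonneg w]
  rw [orthonormal_iff_ite]
  intro i j
  fin_cases i <;> fin_cases j <;>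
    simp only [Matrix.cons_val_zero, Matrix.cons_val_one, Matrix.head_cons, Fin.mk_zero,
      Fin.mk_one] <;>
    norm_num [huu, huw, hwu, hww, hu, hwn]

/-- An isometry carrying a pair of unit vectors with given inner product onto another. -/
lemma exists_isometry_pair {u v u' v' : V d} (hu : ‖u‖ = 1) (hv : ‖v‖ = 1)
    (hu' : ‖u'‖ = 1) (hv' : ‖v'‖ = 1) (hiv : ⟪u, v⟫ = ⟪u', v'⟫) :
    ∃ O : V d ≃ₗᵢ[ℝ] V d, O u = u' ∧ O v = v' := by
  set c : ℝ := ⟪u, v⟫ with hcdef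
  have hone : Orthonormal ℝ (fun _ : Fin 1 => u) := by
    rw [orthonormal_iff_ite]
    intro i j
    rw [Subsingleton.elim i j, if_pos rfl, real_inner_self_eq_norm_sq, hu]; norm_num
  have hone' : Orthonormal ℝ (fun _ : Fin 1 => u') := by
    rw [orthonormal_iff_ite]
    intro i j
    rw [Subsingleton.elim i j, if_pos rfl, real_inner_self_eq_norm_sq, hu']; norm_num
  by_cases hc1 : c = 1
  · obtain ⟨O, hO⟩ := exists_isometry_family hone hone'
    refine ⟨O, hO 0, ?_⟩
    rw [eq_of_inner_eq_one hu hv hc1, eq_of_inner_eq_one hu' hv' (by rw [← hiv]; exact hc1)]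
    exact hO 0
  by_cases hcm1 : c = -1
  · obtain ⟨O, hO⟩ := exists_isometry_family hone hone'
    refine ⟨O, hO 0, ?_⟩
    rw [eq_neg_of_inner_eq_neg_one hu hv hcm1,
      eq_neg_of_inner_eq_neg_one hu' hv' (by rw [← hiv]; exact hcm1), map_neg]
    rw [hO 0]
  · -- generic case
    have h2 := onpair hu hv hcdef.symm hc1 hcm1
    have h2' := onpair hu' hv' (show ⟪u', v'⟫ = c from hiv.symm) hc1 hcm1
    obtain ⟨O, hO⟩ := exists_isometry_family h2 h2'
    have hO0 : O u = u' := by simpa using hO 0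
    have hO1 : O ((Real.sqrt (1 - c ^ 2))⁻¹ • (v - c • u))
        = (Real.sqrt (1 - c ^ 2))⁻¹ • (v' - c • u') := by simpa using hO 1
    refine ⟨O, hO0, ?_⟩
    have hcle : |c| ≤ 1 := by
      have := abs_real_inner_le_norm u v
      rw [← hcdef, hu, hv] at this; simpa using this
    have hclt : c ^ 2 < 1 := by
      rcases lt_or_eq_of_le hcle with h | h
      · nlinarith [abs_nonneg c, neg_abs_le c, le_abs_self c]
      · rcases abs_eq (by norm_num : (0:ℝ) ≤ 1) |>.mp h with h | h
        · exact absurd h hc1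
        · exact absurd h hcm1
    have hs : (0:ℝ) < Real.sqrt (1 - c ^ 2) := Real.sqrt_pos.mpr (by linarith)
    have hv'' : v = c • u + Real.sqrt (1 - c ^ 2) • ((Real.sqrt (1 - c ^ 2))⁻¹ • (v - c • u)) := by
      rw [smul_inv_smul₀ hs.ne']
      abel
    rw [hv'', map_add, _root_.map_smul, _root_.map_smul, hO0, hO1, smul_inv_smul₀ hs.ne']
    abel

lemma Zv_congr (μ : Measure (V d)) (hinv : ∀ O : V d ≃ₗᵢ[ℝ] V d, μ.map O = μ)
    {k : ℕ} {f g : Fin k → V d}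
    (hf : Orthonormal ℝ f) (hg : Orthonormal ℝ g) : μ (Zv f) = μ (Zv g) := by
  obtain ⟨O, hO⟩ := exists_isometry_family hf hg
  have h : Zv f = ⇑O ⁻¹' Zv g := by
    ext z
    simp only [Zv, Set.mem_preimage, Set.mem_setOf_eq]
    refine forall_congr' fun i => ?_
    rw [← hO i, LinearIsometryEquiv.inner_map_map]
  rw [h, meas_preimage μ hinv O (measurableSet_Zv g)]

/-- Key step: adding one vector to an orthonormal family of size ≥ 1 does not change
the measure of the common zero set. -/
lemma Zv_step (μ : Measure (V d)) [IsProbabilityMeasure μ]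
    (hinv : ∀ O : V d ≃ₗᵢ[ℝ] V d, μ.map O = μ) {k : ℕ} (hk : 1 ≤ k)
    (f : Fin (k + 1) → V d) (hf : Orthonormal ℝ f) :
    μ (Zv (f ∘ Fin.castSucc)) = μ (Zv f) := by
  classical
  obtain ⟨m, rfl⟩ : ∃ m, k = m + 1 := ⟨k - 1, by omega⟩
  have hite := orthonormal_iff_ite.mp hf
  have h0l : (0 : Fin (m+2)) ≠ Fin.last (m+1) := by
    intro h
    have := congrArg Fin.val h
    simp [Fin.last] at this
  -- the rotated families
  set F : ℝ → (Fin (m + 1) → EuclideanSpace ℝ (Fin d)) := fun t i =>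
    if i = 0 then Real.cos t • f 0 + Real.sin t • f (Fin.last (m+1)) else f (Fin.castSucc i) with hF
  have hcs0 : ∀ i : Fin (m+1), i ≠ 0 → Fin.castSucc i ≠ 0 := by
    intro i hi h
    exact hi (Fin.castSucc_injective _ (by simpa using h))
  have hcsl : ∀ i : Fin (m+1), Fin.castSucc i ≠ Fin.last (m+1) := fun i => (Fin.castSucc_lt_last i).ne
  have honF : ∀ t, Orthonormal ℝ (F t) := by
    intro t
    rw [orthonormal_iff_ite]
    intro i j
    by_cases hi : i = 0 <;> by_cases hj : j = 0
    · subst hi; subst hj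
      simp only [hF, if_pos rfl]
      rw [inner_add_left, inner_add_right, inner_add_right, real_inner_smul_left,
        real_inner_smul_left, real_inner_smul_left, real_inner_smul_left,
        real_inner_smul_right, real_inner_smul_right, real_inner_smul_right,
        real_inner_smul_right, hite 0 0, hite 0 (Fin.last (m+1)), hite (Fin.last (m+1)) 0,
        hite (Fin.last (m+1)) (Fin.last (m+1))]
      simp [h0l, h0l.symm, Real.sin_sq_add_cos_sq]
      ring_nf
      nlinarith [Real.sin_sq_add_cos_sq t]
    · subst hi
      simp only [hF, if_pos rfl, if_neg hj]
      rw [inner_add_left, real_inner_smul_left, real_inner_smul_left,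
        hite 0 (Fin.castSucc j), hite (Fin.last (m+1)) (Fin.castSucc j)]
      simp [Ne.symm (hcs0 j hj), Ne.symm (hcsl j), hj, Ne.symm hj]
    · subst hj
      simp only [hF, if_pos rfl, if_neg hi]
      rw [inner_add_right, real_inner_smul_right, real_inner_smul_right,
        hite (Fin.castSucc i) 0, hite (Fin.castSucc i) (Fin.last (m+1))]
      simp [hcs0 i hi, hcsl i, hi]
    · simp only [hF, if_neg hi, if_neg hj]
      rw [hite (Fin.castSucc i) (Fin.castSucc j)]
      simp [Fin.castSucc_inj]
  -- each F t has the same Zv-measure as the truncated family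
  have honcs : Orthonormal ℝ (f ∘ Fin.castSucc) := hf.comp _ (Fin.castSucc_injective _)
  have hmeasF : ∀ t, μ (Zv (F t)) = μ (Zv (f ∘ Fin.castSucc)) :=
    fun t => Zv_congr μ hinv (honF t) honcs
  -- Zv f is contained in each Zv (F t)
  have hsub : ∀ t, Zv f ⊆ Zv (F t) := by
    intro t z hz i
    by_cases hi : i = 0
    · subst hi
      simp only [hF, if_pos rfl]
      rw [inner_add_left, real_inner_smul_left, real_inner_smul_left, hz 0, hz (Fin.last (m+1))]
      ring
    · simp only [hF, if_neg hi]
      exact hz _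
  -- the parameters
  set t : ℕ → ℝ := fun n => Real.pi - Real.pi / (n + 1) with ht
  have hsinpos : ∀ m n : ℕ, m < n → 0 < Real.sin (t n - t m) := by
    intro m n hmn
    have h1 : t n - t m = Real.pi / (m + 1) - Real.pi / (n + 1) := by rw [ht]; ring
    apply Real.sin_pos_of_pos_of_lt_pi <;> rw [h1]
    · have : Real.pi / (n + 1) < Real.pi / (m + 1) := by
        apply div_lt_div_of_pos_left Real.pi_pos (by positivity)
        exact_mod_cast by omega
      linarith
    · have h2 : Real.pi / (m + 1) ≤ Real.pi := by
        apply div_le_self Real.pi_pos.le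
        exact_mod_cast by omega
      have h3 : 0 < Real.pi / (n + 1) := by positivity
      linarith
  -- disjointness of the difference sets
  have hdisj : ∀ m n : ℕ, m ≠ n → (Zv (F (t m)) \ Zv f) ∩ (Zv (F (t n)) \ Zv f) = ∅ := by
    intro p q hpq
    rw [Set.eq_empty_iff_forall_notMem]
    rintro z ⟨⟨hzp, hzqot⟩, ⟨hzq, -⟩⟩
    apply hzqot
    -- the two linear equations
    have eqm := hzp 0
    have eqn := hzq 0
    simp only [hF, if_pos rfl] at eqm eqn
    rw [inner_add_left, real_inner_smul_left, real_inner_smul_left] at eqm eqn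
    set a : ℝ := ⟪f 0, z⟫
    set b : ℝ := ⟪f (Fin.last (m+1)), z⟫
    have hs : Real.sin (t q) * Real.cos (t p) - Real.cos (t q) * Real.sin (t p) ≠ 0 := by
      rcases lt_or_gt_of_ne hpq with h | h
      · rw [← Real.sin_sub]; exact (hsinpos p q h).ne'
      · rw [← Real.sin_sub]
        rw [← neg_sub (t p) (t q), Real.sin_neg]
        simpa using (hsinpos q p h).ne'
    have ha : a = 0 := by
      have h1 : (Real.sin (t q) * Real.cos (t p) - Real.cos (t q) * Real.sin (t p)) * a = 0 := by
        linear_combination Real.sin (t q) * eqm - Real.sin (t p) * eqn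
      rcases mul_eq_zero.mp h1 with h | h
      · exact absurd h hs
      · exact h
    have hb : b = 0 := by
      have h1 : (Real.sin (t q) * Real.cos (t p) - Real.cos (t q) * Real.sin (t p)) * b = 0 := by
        linear_combination Real.cos (t p) * eqn - Real.cos (t q) * eqm
      rcases mul_eq_zero.mp h1 with h | h
      · exact absurd h hs
      · exact h
    -- conclude z ∈ Zv f
    intro i
    induction i using Fin.lastCases with
    | last => exact hb
    | cast j =>
      by_cases hj : j = 0
      · subst hj; simpa using ha
      · have := hzp j
        simp only [hF, if_neg hj] at this
        exact this
  -- now the measure argument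
  set c : ℝ≥0∞ := μ (Zv (f ∘ Fin.castSucc)) with hc
  have hfin : μ (Zv f) ≠ ⊤ := measure_ne_top μ _
  have hDval : ∀ n : ℕ, μ (Zv (F (t n)) \ Zv f) = c - μ (Zv f) := by
    intro n
    rw [measure_diff (hsub (t n)) (measurableSet_Zv f).nullMeasurableSet hfin, hmeasF]
  have hle : μ (Zv f) ≤ c := hc ▸ measure_mono (fun z hz i => by
    have := hz (Fin.castSucc i); exact this)
  rcases eq_or_ne (c - μ (Zv f)) 0 with h0 | h0
  · have := tsub_eq_zero_iff_le.mp h0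
    exact le_antisymm this hle
  · exfalso
    have hdisjoint : Pairwise (Function.onFun Disjoint fun n : ℕ => Zv (F (t n)) \ Zv f) := by
      intro p q hpq
      exact Set.disjoint_iff_inter_eq_empty.mpr (hdisj p q hpq)
    have hmeas : ∀ n : ℕ, MeasurableSet (Zv (F (t n)) \ Zv f) :=
      fun n => (measurableSet_Zv _).diff (measurableSet_Zv f)
    have := measure_iUnion (μ := μ) hdisjoint hmeas
    rw [tsum_congr hDval] at this
    rw [ENNReal.tsum_const_eq_top_of_ne_zero h0] at this
    exact absurd (this ▸ measure_ne_top μ _) (by simp)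

lemma hyperplane_null (μ : Measure (V d)) [IsProbabilityMeasure μ]
    (hsphere : ∀ᵐ z ∂μ, ‖z‖ = 1)
    (hinv : ∀ O : V d ≃ₗᵢ[ℝ] V d, μ.map O = μ) {w : V d} (hw : ‖w‖ = 1) :
    μ {z : V d | ⟪w, z⟫ = 0} = 0 := by
  classical
  have hw0 : w ≠ 0 := by intro h; rw [h, norm_zero] at hw; norm_num at hw
  have hnt : Nontrivial (EuclideanSpace ℝ (Fin d)) := nontrivial_of_ne w 0 hw0
  have hd : 1 ≤ d := by
    have := Module.finrank_pos (R := ℝ) (M := EuclideanSpace ℝ (Fin d))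
    exact (by simpa [finrank_euclideanSpace_fin] using this : 0 < d)
  set b := EuclideanSpace.basisFun (Fin d) ℝ with hb
  have hnull : μ {z : EuclideanSpace ℝ (Fin d) | ¬ ‖z‖ = 1} = 0 := ae_iff.mp hsphere
  have key : ∀ j k, 1 ≤ k → ∀ hkd : k + j = d,
      μ (Zv (fun i : Fin k => b (Fin.castLE (by omega) i))) = 0 := by
    intro j
    induction j with
    | zero =>
      intro k hk hkd
      refine le_antisymm (le_trans (measure_mono ?_) hnull.le) zero_le
      intro z hz
      have hz0 : z = 0 := by
        have hrepr : b.repr z = 0 := by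
          ext i
          have : (Fin.castLE (by omega : k ≤ d) (Fin.cast hkd.symm i)) = i := by
            apply Fin.ext; simp
          have h2 := hz (Fin.cast hkd.symm i)
          simp only [this] at h2
          rw [b.repr_apply_apply]
          simpa using h2
        have := congrArg b.repr.symm hrepr
        simpa using this
      simp [hz0]
    | succ j ih =>
      intro k hk hkd
      have hk1 : k + 1 ≤ d := by omega
      set g : Fin (k + 1) → EuclideanSpace ℝ (Fin d) :=
        fun i => b (Fin.castLE hk1 i) with hg
      have hgon : Orthonormal ℝ g :=
        b.orthonormal.comp _ (fun a c h => by
          apply Fin.ext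
          simpa using congrArg Fin.val h)
      have hcomp : (fun i : Fin k => b (Fin.castLE (by omega : k ≤ d) i)) = g ∘ Fin.castSucc := by
        funext i
        simp only [hg, Function.comp_apply]
        congr 1
      rw [hcomp, Zv_step μ hinv hk g hgon]
      exact ih (k + 1) (by omega) (by omega)
  have hsingle : Orthonormal ℝ (fun _ : Fin 1 => w) := by
    rw [orthonormal_iff_ite]
    intro i j
    rw [Subsingleton.elim i j, if_pos rfl, real_inner_self_eq_norm_sq, hw]; norm_num
  have hbase : Orthonormal ℝ (fun i : Fin 1 => b (Fin.castLE hd i)) :=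
    b.orthonormal.comp _ (fun a c h => by
      apply Fin.ext
      simpa using congrArg Fin.val h)
  have hset : {z : EuclideanSpace ℝ (Fin d) | ⟪w, z⟫ = 0} = Zv (fun _ : Fin 1 => w) := by
    ext z; simp [Zv]
  rw [hset, Zv_congr μ hinv hsingle hbase]
  exact key (d - 1) 1 le_rfl (by omega)


lemma sign_logic {A B C : ℝ} (hA : A ≠ 0) (hB : B ≠ 0) (hC : C ≠ 0)
    (h1 : 0 < A → 0 < C → 0 < B) (h2 : A < 0 → C < 0 → B < 0) :
    (¬(0 ≤ A ↔ 0 ≤ C) ↔ (¬(0 ≤ A ↔ 0 ≤ B) ∨ ¬(0 ≤ B ↔ 0 ≤ C)))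
    ∧ ¬(¬(0 ≤ A ↔ 0 ≤ B) ∧ ¬(0 ≤ B ↔ 0 ≤ C)) := by
  rcases hA.lt_or_gt with ha | ha <;> rcases hB.lt_or_gt with hb | hb <;>
    rcases hC.lt_or_gt with hc | hc <;>
    simp [ha.le, hb.le, hc.le, not_le.mpr ha, not_le.mpr hb, not_le.mpr hc] <;>
    first
      | linarith [h1 ha hc]
      | linarith [h2 ha hc]


lemma cauchy_lin (g : ℝ → ℝ)
    (hadd : ∀ a b, 0 ≤ a → 0 ≤ b → a + b ≤ Real.pi → g (a + b) = g a + g b)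
    (hnn : ∀ x, 0 ≤ g x) (hpi : g Real.pi = 1) :
    ∀ θ, 0 ≤ θ → θ ≤ Real.pi → g θ = θ / Real.pi := by
  have pi_pos := Real.pi_pos
  have h0 : g 0 = 0 := by
    have := hadd 0 0 le_rfl le_rfl (by linarith)
    simp at this
    linarith
  have hmono : ∀ x y, 0 ≤ x → x ≤ y → y ≤ Real.pi → g x ≤ g y := by
    intro x y hx hxy hy
    have := hadd x (y - x) hx (by linarith) (by linarith)
    rw [add_sub_cancel] at this
    have := hnn (y - x)
    linarith
  have hstep : ∀ n : ℕ, ∀ k : ℕ, k ≤ n + 1 → g (k * (Real.pi / (n + 1))) = k * g (Real.pi / (n + 1)) := by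
    intro n k
    induction k with
    | zero => intro _; simpa using h0
    | succ k ih =>
      intro hk
      have hk' : (k : ℝ) ≤ n + 1 := by exact_mod_cast Nat.le_of_succ_le hk
      have hk'' : (k : ℝ) + 1 ≤ n + 1 := by exact_mod_cast hk
      have hdiv : 0 < Real.pi / (n + 1) := by positivity
      have h1 : g ((k : ℝ) * (Real.pi / (n + 1)) + Real.pi / (n + 1))
          = g ((k : ℝ) * (Real.pi / (n + 1))) + g (Real.pi / (n + 1)) := by
        apply hadd _ _ (by positivity) hdiv.le
        have : ((k : ℝ) + 1) * (Real.pi / (n + 1)) ≤ ((n : ℝ) + 1) * (Real.pi / (n + 1)) := by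
          apply mul_le_mul_of_nonneg_right hk'' hdiv.le
        rw [mul_div_cancel₀] at this
        · linarith [this]
        · positivity
      push_cast
      rw [add_mul, one_mul, h1, ih (Nat.le_of_succ_le hk)]
      ring
  have hfrac : ∀ n : ℕ, g (Real.pi / (n + 1)) = 1 / (n + 1) := by
    intro n
    have := hstep n (n + 1) le_rfl
    have hne : ((n : ℝ) + 1) ≠ 0 := by positivity
    rw [show ((n + 1 : ℕ) : ℝ) = (n : ℝ) + 1 by push_cast; ring] at this
    rw [mul_div_cancel₀ _ hne, hpi] at this
    field_simp
    linarith
  intro θ hθ0 hθpi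
  rcases eq_or_lt_of_le hθpi with h | hlt
  · rw [h, hpi, div_self pi_pos.ne']
  apply eq_of_forall_dist_le
  intro ε hε
  obtain ⟨n, hn⟩ := exists_nat_gt (1 / ε)
  have hn0 : (0:ℝ) < n + 1 := by positivity
  have hn1 : 1 / ((n:ℝ) + 1) ≤ ε := by
    rw [div_le_iff₀ hn0]
    rw [div_lt_iff₀ hε] at hn
    nlinarith
  set q : ℝ := θ * (n + 1) / Real.pi with hq
  have hq0 : 0 ≤ q := by positivity
  have hqlt : q < n + 1 := by
    rw [hq, div_lt_iff₀ pi_pos]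
    nlinarith
  set k : ℕ := ⌊q⌋₊ with hk
  have hkq : (k : ℝ) ≤ q := Nat.floor_le hq0
  have hqk : q < k + 1 := Nat.lt_floor_add_one q
  have hkn : k + 1 ≤ n + 1 := by
    have : (k : ℝ) < n + 1 := lt_of_le_of_lt hkq hqlt
    exact_mod_cast Nat.succ_le_of_lt (by exact_mod_cast this)
  -- bounds on θ
  have hθlb : (k : ℝ) * (Real.pi / (n + 1)) ≤ θ := by
    calc (k : ℝ) * (Real.pi / (n + 1)) ≤ (θ * (n + 1) / Real.pi) * (Real.pi / (n + 1)) := by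
          apply mul_le_mul_of_nonneg_right hkq (by positivity)
      _ = θ := by field_simp
  have hθub : θ ≤ ((k : ℝ) + 1) * (Real.pi / (n + 1)) := by
    calc θ = (θ * (n + 1) / Real.pi) * (Real.pi / (n + 1)) := by field_simp
      _ ≤ ((k : ℝ) + 1) * (Real.pi / (n + 1)) := by
          apply mul_le_mul_of_nonneg_right hqk.le (by positivity)
  have hub_pi : ((k : ℝ) + 1) * (Real.pi / (n + 1)) ≤ Real.pi := by
    have : ((k : ℝ) + 1) ≤ (n : ℝ) + 1 := by exact_mod_cast hkn
    calc ((k : ℝ) + 1) * (Real.pi / (n + 1)) ≤ ((n : ℝ) + 1) * (Real.pi / (n + 1)) := by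
          apply mul_le_mul_of_nonneg_right this (by positivity)
      _ = Real.pi := by field_simp
  have hglb : (k : ℝ) * (1 / (n + 1)) ≤ g θ := by
    have := hmono ((k : ℝ) * (Real.pi / (n + 1))) θ (by positivity) hθlb hθpi
    rw [hstep n k (by omega), hfrac n] at this
    exact this
  have hgub : g θ ≤ ((k : ℝ) + 1) * (1 / (n + 1)) := by
    have := hmono θ (((k : ℝ) + 1) * (Real.pi / (n + 1))) hθ0 hθub hub_pi
    have h2 : g (((k : ℝ) + 1) * (Real.pi / (n + 1))) = ((k : ℝ) + 1) * g (Real.pi / (n + 1)) := by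
      have := hstep n (k + 1) hkn
      push_cast at this
      exact this
    rw [h2, hfrac n] at this
    exact this
  -- bounds on θ / π
  have htlb : (k : ℝ) * (1 / (n + 1)) ≤ θ / Real.pi := by
    rw [le_div_iff₀ pi_pos]
    calc (k : ℝ) * (1 / (n + 1)) * Real.pi = (k : ℝ) * (Real.pi / (n + 1)) := by ring
      _ ≤ θ := hθlb
  have htub : θ / Real.pi ≤ ((k : ℝ) + 1) * (1 / (n + 1)) := by
    rw [div_le_iff₀ pi_pos]
    calc θ ≤ ((k : ℝ) + 1) * (Real.pi / (n + 1)) := hθub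
      _ = ((k : ℝ) + 1) * (1 / (n + 1)) * Real.pi := by ring
  rw [Real.dist_eq, abs_le]
  constructor <;> nlinarith [hn1]

lemma measurableSet_perp (u : V d) : MeasurableSet {z : V d | ⟪u, z⟫ = 0} := by
  have : Continuous fun z : V d => ⟪u, z⟫ := Continuous.inner continuous_const continuous_id
  exact (isClosed_eq this continuous_const).measurableSet

/-- Point on the unit circle spanned by an orthonormal pair. -/
noncomputable def uth (e f : V d) (t : ℝ) : V d := Real.cos t • e + Real.sin t • f

lemma inner_uth {e f : V d} (he : ‖e‖ = 1) (hf : ‖f‖ = 1) (hef : ⟪e, f⟫ = 0) (s t : ℝ) :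
    ⟪uth e f s, uth e f t⟫ = Real.cos (s - t) := by
  have hee : ⟪e, e⟫ = 1 := by rw [real_inner_self_eq_norm_sq, he]; norm_num
  have hff : ⟪f, f⟫ = 1 := by rw [real_inner_self_eq_norm_sq, hf]; norm_num
  have hfe : ⟪f, e⟫ = 0 := by rw [real_inner_comm]; exact hef
  simp only [uth]
  rw [inner_add_left, inner_add_right, inner_add_right, real_inner_smul_left,
    real_inner_smul_left, real_inner_smul_left, real_inner_smul_left,
    real_inner_smul_right, real_inner_smul_right, real_inner_smul_right,
    real_inner_smul_right, hee, hff, hef, hfe, Real.cos_sub]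
  ring

lemma norm_uth {e f : V d} (he : ‖e‖ = 1) (hf : ‖f‖ = 1) (hef : ⟪e, f⟫ = 0) (t : ℝ) :
    ‖uth e f t‖ = 1 := by
  have h1 : ⟪uth e f t, uth e f t⟫ = 1 := by
    rw [inner_uth he hf hef t t, sub_self, Real.cos_zero]
  rw [real_inner_self_eq_norm_sq] at h1
  nlinarith [norm_nonneg (uth e f t)]

lemma uth_zero (e f : V d) : uth e f 0 = e := by simp [uth]

lemma uth_pi (e f : V d) : uth e f Real.pi = -e := by simp [uth]

lemma Ev_self (u : V d) : Ev u u = ∅ := by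
  rw [Set.eq_empty_iff_forall_notMem]
  intro z hz
  exact hz Iff.rfl

lemma Ev_congr (μ : Measure (V d)) (hinv : ∀ O : V d ≃ₗᵢ[ℝ] V d, μ.map O = μ)
    {u v u' v' : V d} (hu : ‖u‖ = 1) (hv : ‖v‖ = 1) (hu' : ‖u'‖ = 1) (hv' : ‖v'‖ = 1)
    (hiv : ⟪u, v⟫ = ⟪u', v'⟫) : μ (Ev u v) = μ (Ev u' v') := by
  obtain ⟨O, hO1, hO2⟩ := exists_isometry_pair hu hv hu' hv' hiv
  have h : Ev u v = ⇑O ⁻¹' Ev u' v' := by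
    ext z
    simp only [Ev, Set.mem_preimage, Set.mem_setOf_eq, ← hO1, ← hO2,
      LinearIsometryEquiv.inner_map_map]
  rw [h, meas_preimage μ hinv O (measurableSet_Ev u' v')]

lemma Ev_pi (μ : Measure (V d)) [IsProbabilityMeasure μ]
    (hsphere : ∀ᵐ z ∂μ, ‖z‖ = 1) (hinv : ∀ O : V d ≃ₗᵢ[ℝ] V d, μ.map O = μ)
    {u : V d} (hu : ‖u‖ = 1) : μ (Ev u (-u)) = 1 := by
  rw [← prob_compl_eq_zero_iff (measurableSet_Ev u (-u))]
  refine le_antisymm (le_trans (measure_mono ?_) (hyperplane_null μ hsphere hinv hu).le)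
    zero_le
  intro z hz
  simp only [Set.mem_compl_iff, Ev, Set.mem_setOf_eq, not_not, inner_neg_left] at hz
  by_contra hne
  rcases lt_or_gt_of_ne (show ⟪u, z⟫ ≠ 0 from hne) with h | h
  · have := hz.mpr (by linarith)
    linarith
  · have := hz.mp (by linarith)
    linarith

lemma Ev_add (μ : Measure (V d)) [IsProbabilityMeasure μ]
    (hsphere : ∀ᵐ z ∂μ, ‖z‖ = 1) (hinv : ∀ O : V d ≃ₗᵢ[ℝ] V d, μ.map O = μ)
    {e f : V d} (he : ‖e‖ = 1) (hf : ‖f‖ = 1) (hef : ⟪e, f⟫ = 0)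
    {a b : ℝ} (ha : 0 ≤ a) (hb : 0 ≤ b) (hab : a + b ≤ Real.pi) :
    μ (Ev (uth e f 0) (uth e f (a + b)))
      = μ (Ev (uth e f 0) (uth e f a)) + μ (Ev (uth e f a) (uth e f (a + b))) := by
  rcases eq_or_lt_of_le ha with ha0 | ha0
  · rw [← ha0, zero_add, Ev_self, measure_empty, zero_add]
  rcases eq_or_lt_of_le hb with hb0 | hb0
  · rw [← hb0, add_zero, Ev_self, measure_empty, add_zero]
  set N : Set (V d) := {z : V d | ⟪uth e f 0, z⟫ = 0} ∪
    ({z : V d | ⟪uth e f a, z⟫ = 0} ∪ {z : V d | ⟪uth e f (a + b), z⟫ = 0}) with hN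
  have hNnull : μ N = 0 :=
    measure_union_null (hyperplane_null μ hsphere hinv (norm_uth he hf hef 0))
      (measure_union_null (hyperplane_null μ hsphere hinv (norm_uth he hf hef a))
        (hyperplane_null μ hsphere hinv (norm_uth he hf hef (a + b))))
  have hNmeas : MeasurableSet N :=
    (measurableSet_perp _).union ((measurableSet_perp _).union (measurableSet_perp _))
  have hnz : ∀ z : V d, z ∉ N →
      ⟪uth e f 0, z⟫ ≠ 0 ∧ ⟪uth e f a, z⟫ ≠ 0 ∧ ⟪uth e f (a + b), z⟫ ≠ 0 := by
    intro z hz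
    simp only [hN, Set.mem_union, Set.mem_setOf_eq, not_or] at hz
    exact ⟨hz.1, hz.2.1, hz.2.2⟩
  have hmid : ∀ z : V d, z ∉ N →
      (0 < ⟪uth e f 0, z⟫ → 0 < ⟪uth e f (a + b), z⟫ → 0 < ⟪uth e f a, z⟫) ∧
      (⟪uth e f 0, z⟫ < 0 → ⟪uth e f (a + b), z⟫ < 0 → ⟪uth e f a, z⟫ < 0) := by
    intro z hz
    rcases eq_or_lt_of_le hab with habπ | habπ
    · have hC : uth e f (a + b) = -uth e f 0 := by
        rw [habπ, uth_pi, uth_zero]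
      rw [hC, inner_neg_left]
      constructor
      · intro h1 h2; linarith
      · intro h1 h2; linarith
    · have hsa : 0 < Real.sin a := Real.sin_pos_of_pos_of_lt_pi ha0 (by linarith)
      have hsb : 0 < Real.sin b := Real.sin_pos_of_pos_of_lt_pi hb0 (by linarith)
      have hsab : 0 < Real.sin (a + b) := Real.sin_pos_of_pos_of_lt_pi (by linarith) habπ
      have hvec : Real.sin (a + b) • uth e f a
          = Real.sin b • uth e f 0 + Real.sin a • uth e f (a + b) := by
        simp only [uth]
        rw [Real.cos_zero, Real.sin_zero, Real.sin_add, Real.cos_add]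
        match_scalars
        · linear_combination Real.sin b * Real.sin_sq_add_cos_sq a
        · ring
      have hB : Real.sin (a + b) * ⟪uth e f a, z⟫
          = Real.sin b * ⟪uth e f 0, z⟫ + Real.sin a * ⟪uth e f (a + b), z⟫ := by
        have h := congrArg (fun x : V d => ⟪x, z⟫) hvec
        simpa only [inner_add_left, real_inner_smul_left] using h
      constructor <;> intro h1 h2 <;> nlinarith
  have hsetid : Ev (uth e f 0) (uth e f (a + b)) \ N
      = (Ev (uth e f 0) (uth e f a) \ N) ∪ (Ev (uth e f a) (uth e f (a + b)) \ N) := by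
    ext z
    simp only [Set.mem_diff, Set.mem_union, Ev, Set.mem_setOf_eq]
    constructor
    · rintro ⟨h3, hzN⟩
      obtain ⟨hA, hB, hC⟩ := hnz z hzN
      obtain ⟨hm1, hm2⟩ := hmid z hzN
      rcases (sign_logic hA hB hC hm1 hm2).1.mp h3 with h | h
      · exact Or.inl ⟨h, hzN⟩
      · exact Or.inr ⟨h, hzN⟩
    · rintro (⟨h1, hzN⟩ | ⟨h2, hzN⟩)
      · obtain ⟨hA, hB, hC⟩ := hnz z hzN
        obtain ⟨hm1, hm2⟩ := hmid z hzN
        exact ⟨(sign_logic hA hB hC hm1 hm2).1.mpr (Or.inl h1), hzN⟩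
      · obtain ⟨hA, hB, hC⟩ := hnz z hzN
        obtain ⟨hm1, hm2⟩ := hmid z hzN
        exact ⟨(sign_logic hA hB hC hm1 hm2).1.mpr (Or.inr h2), hzN⟩
  have hdisj : Disjoint (Ev (uth e f 0) (uth e f a) \ N)
      (Ev (uth e f a) (uth e f (a + b)) \ N) := by
    rw [Set.disjoint_left]
    rintro z ⟨h1, hzN⟩ ⟨h2, -⟩
    obtain ⟨hA, hB, hC⟩ := hnz z hzN
    obtain ⟨hm1, hm2⟩ := hmid z hzN
    exact (sign_logic hA hB hC hm1 hm2).2 ⟨h1, h2⟩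
  calc μ (Ev (uth e f 0) (uth e f (a + b)))
      = μ (Ev (uth e f 0) (uth e f (a + b)) \ N) := (measure_diff_null hNnull).symm
    _ = μ (Ev (uth e f 0) (uth e f a) \ N) + μ (Ev (uth e f a) (uth e f (a + b)) \ N) := by
        rw [hsetid]
        exact measure_union hdisj ((measurableSet_Ev _ _).diff hNmeas)
    _ = μ (Ev (uth e f 0) (uth e f a)) + μ (Ev (uth e f a) (uth e f (a + b))) := by
        rw [measure_diff_null hNnull, measure_diff_null hNnull]

lemma ite_ne_iff {p q : Prop} [Decidable p] [Decidable q] :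
    ((if p then (1:ℝ) else -1) ≠ if q then (1:ℝ) else -1) ↔ ¬(p ↔ q) := by
  by_cases hp : p <;> by_cases hq : q <;> simp [hp, hq] <;> norm_num

end RandomHyperplaneAux

theorem random_hyperplane_cut_probability {d : ℕ}
    (u v : EuclideanSpace ℝ (Fin d)) (hu : ‖u‖ = 1) (hv : ‖v‖ = 1)
    (μ : Measure (EuclideanSpace ℝ (Fin d))) [IsProbabilityMeasure μ]
    (hsphere : ∀ᵐ z ∂μ, ‖z‖ = 1)
    (hinv : ∀ O : EuclideanSpace ℝ (Fin d) ≃ₗᵢ[ℝ] EuclideanSpace ℝ (Fin d),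
      μ.map O = μ) :
    μ {z | (if 0 ≤ ⟪u, z⟫ then (1 : ℝ) else -1) ≠ (if 0 ≤ ⟪v, z⟫ then (1 : ℝ) else -1)}
      = ENNReal.ofReal (Real.arccos ⟪u, v⟫ / Real.pi) := by
  classical
  open RandomHyperplaneAux in
  have hset : {z | (if 0 ≤ ⟪u, z⟫ then (1 : ℝ) else -1) ≠ (if 0 ≤ ⟪v, z⟫ then (1 : ℝ) else -1)}
      = RandomHyperplaneAux.Ev u v := by
    ext z
    simp only [Set.mem_setOf_eq, RandomHyperplaneAux.Ev]
    exact RandomHyperplaneAux.ite_ne_iff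
  rw [hset]
  have huu : ⟪u, u⟫ = 1 := by rw [real_inner_self_eq_norm_sq, hu]; norm_num
  set c : ℝ := ⟪u, v⟫ with hc
  have hcle : |c| ≤ 1 := by
    have := abs_real_inner_le_norm u v
    rw [hu, hv] at this; simpa using this
  obtain ⟨hcl, hcr⟩ := abs_le.mp hcle
  by_cases hc1 : c = 1
  · have hvu : v = u := RandomHyperplaneAux.eq_of_inner_eq_one hu hv hc1
    rw [hvu, RandomHyperplaneAux.Ev_self, measure_empty, hc1, Real.arccos_one, zero_div,
      ENNReal.ofReal_zero]
  by_cases hcm1 : c = -1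
  · have hvu : v = -u := RandomHyperplaneAux.eq_neg_of_inner_eq_neg_one hu hv hcm1
    rw [hvu, RandomHyperplaneAux.Ev_pi μ hsphere hinv hu, hcm1,
      Real.arccos_neg_one, div_self Real.pi_ne_zero, ENNReal.ofReal_one]
  -- generic case
  have hclt : c ^ 2 < 1 := by
    rcases lt_or_eq_of_le hcle with h | h
    · nlinarith [abs_nonneg c, neg_abs_le c, le_abs_self c]
    · rcases abs_eq (by norm_num : (0:ℝ) ≤ 1) |>.mp h with h | h
      · exact absurd h hc1
      · exact absurd h hcm1
  set sq : ℝ := Real.sqrt (1 - c ^ 2) with hsq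
  have hs : (0:ℝ) < sq := Real.sqrt_pos.mpr (by linarith)
  have hs2 : sq ^ 2 = 1 - c ^ 2 := Real.sq_sqrt (by linarith)
  have hvv : ⟪v, v⟫ = 1 := by rw [real_inner_self_eq_norm_sq, hv]; norm_num
  have hvu : ⟪v, u⟫ = c := by rw [real_inner_comm]
  set w : EuclideanSpace ℝ (Fin d) := sq⁻¹ • (v - c • u) with hw
  have huw : ⟪u, w⟫ = 0 := by
    rw [hw, real_inner_smul_right, inner_sub_right, real_inner_smul_right, huu, ← hc]
    ring
  have hww : ⟪w, w⟫ = 1 := by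
    rw [hw, real_inner_smul_right, real_inner_smul_left, inner_sub_left, inner_sub_right,
      inner_sub_right, real_inner_smul_left, real_inner_smul_left, real_inner_smul_right,
      real_inner_smul_right, huu, hvv, hvu, ← hc]
    field_simp
    nlinarith [hs, hs2]
  have hw1 : ‖w‖ = 1 := by
    rw [real_inner_self_eq_norm_sq] at hww
    nlinarith [norm_nonneg w]
  set θ : ℝ := Real.arccos c with hθ
  have hθ0 : 0 ≤ θ := Real.arccos_nonneg c
  have hθπ : θ ≤ Real.pi := Real.arccos_le_pi c
  have hcos : Real.cos θ = c := Real.cos_arccos hcl hcr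
  have hsin : Real.sin θ = sq := by rw [hθ, Real.sin_arccos, hsq]
  have hv' : RandomHyperplaneAux.uth u w θ = v := by
    rw [RandomHyperplaneAux.uth, hcos, hsin, hw, smul_inv_smul₀ hs.ne']
    abel
  have hu' : RandomHyperplaneAux.uth u w 0 = u := RandomHyperplaneAux.uth_zero u w
  set G : ℝ → ℝ := fun t =>
    (μ (RandomHyperplaneAux.Ev (RandomHyperplaneAux.uth u w 0)
      (RandomHyperplaneAux.uth u w t))).toReal with hG
  have hGadd : ∀ a b, 0 ≤ a → 0 ≤ b → a + b ≤ Real.pi → G (a + b) = G a + G b := by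
    intro a b ha hb hab
    have h1 := RandomHyperplaneAux.Ev_add μ hsphere hinv hu hw1 huw ha hb hab
    have h2 : ⟪RandomHyperplaneAux.uth u w a, RandomHyperplaneAux.uth u w (a + b)⟫
        = ⟪RandomHyperplaneAux.uth u w 0, RandomHyperplaneAux.uth u w b⟫ := by
      rw [RandomHyperplaneAux.inner_uth hu hw1 huw, RandomHyperplaneAux.inner_uth hu hw1 huw]
      exact congrArg Real.cos (by ring)
    have h3 := RandomHyperplaneAux.Ev_congr μ hinv (RandomHyperplaneAux.norm_uth hu hw1 huw a)
      (RandomHyperplaneAux.norm_uth hu hw1 huw (a + b))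
      (RandomHyperplaneAux.norm_uth hu hw1 huw 0)
      (RandomHyperplaneAux.norm_uth hu hw1 huw b) h2
    rw [hG]
    simp only
    rw [h1, h3, ENNReal.toReal_add (measure_ne_top μ _) (measure_ne_top μ _)]
  have hGnn : ∀ x, 0 ≤ G x := fun x => ENNReal.toReal_nonneg
  have hGpi : G Real.pi = 1 := by
    rw [hG]
    simp only
    have hneg : RandomHyperplaneAux.uth u w Real.pi = -(RandomHyperplaneAux.uth u w 0) := by
      rw [RandomHyperplaneAux.uth_pi, RandomHyperplaneAux.uth_zero]
    rw [hneg, RandomHyperplaneAux.Ev_pi μ hsphere hinv (RandomHyperplaneAux.norm_uth hu hw1 huw 0)]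
    simp
  have hGθ := RandomHyperplaneAux.cauchy_lin G hGadd hGnn hGpi θ hθ0 hθπ
  have hfin : μ (RandomHyperplaneAux.Ev (RandomHyperplaneAux.uth u w 0)
      (RandomHyperplaneAux.uth u w θ)) ≠ ⊤ := measure_ne_top μ _
  calc μ (RandomHyperplaneAux.Ev u v)
      = μ (RandomHyperplaneAux.Ev (RandomHyperplaneAux.uth u w 0)
        (RandomHyperplaneAux.uth u w θ)) := by rw [hu', hv']
    _ = ENNReal.ofReal (G θ) := (ENNReal.ofReal_toReal hfin).symm
    _ = ENNReal.ofReal (Real.arccos c / Real.pi) := by rw [hGθ, hθ]
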